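/- Let θ, F̄ : [0,∞) → ℝ be continuous with θ > 0 and F̄ > 0, and suppose there exists δ > 0 with θ(s)/F̄(s) > δ for all s. Let v : [0,∞) → ℝ be a C¹ function with v(0) < √(1−δ), |v| < 1, satisfying v'(s) ≤ −θ(s)/(1−v(s)²) + F̄(s) whenever v(s) ≥ 0. Then v(s) < √(1−δ) for all s ≥ 0. -/
import Mathlib


open Set

/-- Improved barrier estimate: if `θ, F̄ > 0` are continuous on `[0,∞)` with
`θ/F̄ > δ > 0`, and a `C¹` function `v` with `v(0) < √(1−δ)`, `|v| < 1` satisfies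
`v' ≤ −θ/(1−v²) + F̄` whenever `v ≥ 0`, then `v < √(1−δ)` everywhere on `[0,∞)`. -/
theorem jang_improved_barrier (θ Fbar : ℝ → ℝ) (δ : ℝ) (hδ : 0 < δ)
    (hθc : ContinuousOn θ (Ici 0)) (hFc : ContinuousOn Fbar (Ici 0))
    (hθ : ∀ s ∈ Ici (0 : ℝ), 0 < θ s) (hF : ∀ s ∈ Ici (0 : ℝ), 0 < Fbar s)
    (hratio : ∀ s ∈ Ici (0 : ℝ), δ < θ s / Fbar s)
    (v v' : ℝ → ℝ) (hv : ∀ s ∈ Ici (0 : ℝ), HasDerivAt v (v' s) s)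
    (hv'c : ContinuousOn v' (Ici 0))
    (h0 : v 0 < Real.sqrt (1 - δ)) (hv1 : ∀ s ∈ Ici (0 : ℝ), |v s| < 1)
    (hineq : ∀ s ∈ Ici (0 : ℝ), 0 ≤ v s →
      v' s ≤ -θ s / (1 - v s ^ 2) + Fbar s) :
    ∀ s ∈ Ici (0 : ℝ), v s < Real.sqrt (1 - δ) := by
  set c := Real.sqrt (1 - δ) with hc
  have hc0 : 0 ≤ c := Real.sqrt_nonneg _
  have hc2 : 1 - c ^ 2 ≤ δ := by
    rcases le_or_gt δ 1 with h | h
    · rw [hc, Real.sq_sqrt (by linarith)]; linarith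
    · rw [hc, Real.sqrt_eq_zero'.mpr (by linarith : (1:ℝ) - δ ≤ 0)]; norm_num; linarith
  by_contra hcon
  push_neg at hcon
  obtain ⟨t, ht0, htc⟩ := hcon
  -- the set where v ≥ c
  set S : Set ℝ := Ici 0 ∩ v ⁻¹' Ici c with hS
  have hvcont : ContinuousOn v (Ici 0) := fun s hs =>
    (hv s hs).continuousAt.continuousWithinAt
  have hSclosed : IsClosed S :=
    hvcont.preimage_isClosed_of_isClosed isClosed_Ici isClosed_Ici
  have hSne : S.Nonempty := ⟨t, ht0, htc⟩
  have hSbdd : BddBelow S := ⟨0, fun x hx => hx.1⟩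
  set s₁ := sInf S with hs₁
  have hs₁S : s₁ ∈ S := hSclosed.csInf_mem hSne hSbdd
  have hs₁0 : (0:ℝ) ≤ s₁ := hs₁S.1
  have hvs₁ : c ≤ v s₁ := hs₁S.2
  have hlt : ∀ s, 0 ≤ s → s < s₁ → v s < c := by
    intro s hs hss
    by_contra hge
    push_neg at hge
    exact absurd (csInf_le hSbdd ⟨hs, hge⟩) (not_le.mpr hss)
  have hs₁pos : 0 < s₁ := by
    rcases hs₁0.lt_or_eq with h | h
    · exact h
    · exact absurd (h ▸ hvs₁) (not_le.mpr h0)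
  -- v' s₁ ≥ 0
  have hd : 0 ≤ v' s₁ := by
    by_contra hneg
    push_neg at hneg
    have hslope := hasDerivAt_iff_tendsto_slope.mp (hv s₁ (by exact hs₁0))
    have hslope' : Filter.Tendsto (slope v s₁) (nhdsWithin s₁ (Iio s₁))
        (nhds (v' s₁)) :=
      hslope.mono_left (nhdsWithin_mono _ (fun x hx => ne_of_lt hx))
    have hev : ∀ᶠ x in nhdsWithin s₁ (Iio s₁), slope v s₁ x < 0 :=
      hslope'.eventually (gt_mem_nhds hneg)
    have hmem : Ioo (0:ℝ) s₁ ∈ nhdsWithin s₁ (Iio s₁) :=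
      Ioo_mem_nhdsLT_of_mem ⟨hs₁pos, le_refl s₁⟩
    obtain ⟨x, hx1, hx2⟩ := (hev.and (Filter.eventually_iff_exists_mem.mpr
      ⟨Ioo 0 s₁, hmem, fun y hy => hy⟩)).exists
    have hxden : x - s₁ < 0 := by linarith [hx2.2]
    have hxnum : 0 < v x - v s₁ := by
      rcases div_neg_iff.mp (by simpa [slope_def_field, div_eq_div_iff] using hx1 :
        (v x - v s₁) / (x - s₁) < 0) with h | h
      · linarith [h.1, h.2]
      · linarith [h.1, h.2]
    have := hlt x hx2.1.le hx2.2
    linarith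
  have hθs := hθ s₁ hs₁0
  have hFs := hF s₁ hs₁0
  have habs := hv1 s₁ hs₁0
  have hv2 : v s₁ ^ 2 < 1 := by
    have h' := abs_lt.mp habs
    nlinarith [h'.1, h'.2]
  have hpos : 0 < 1 - v s₁ ^ 2 := by linarith
  have hle : 1 - v s₁ ^ 2 ≤ δ := by
    have : c ^ 2 ≤ v s₁ ^ 2 := pow_le_pow_left₀ hc0 hvs₁ 2
    linarith
  have hineq1 := hineq s₁ hs₁0 (hc0.trans hvs₁)
  have : θ s₁ / (1 - v s₁ ^ 2) ≤ Fbar s₁ := by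
    have h2 : 0 ≤ -(θ s₁ / (1 - v s₁ ^ 2)) + Fbar s₁ := by
      rw [← neg_div]; exact hd.trans hineq1
    linarith
  have hθle : θ s₁ ≤ δ * Fbar s₁ := by
    have h1 : θ s₁ ≤ (1 - v s₁ ^ 2) * Fbar s₁ := by
      rw [div_le_iff₀ hpos] at this; linarith [this]
    calc θ s₁ ≤ (1 - v s₁ ^ 2) * Fbar s₁ := h1
      _ ≤ δ * Fbar s₁ := mul_le_mul_of_nonneg_right hle hFs.le
  have := hratio s₁ hs₁0
  rw [lt_div_iff₀ hFs] at this
  linarith
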